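/- Let z, w, z', w' ∈ ℂ. Then the identity (1 + (z𝐣)t)·(1 + (w𝐣)t) = (1 + (z'𝐣)t)·(1 + (w'𝐣)t) holds in ℍ[t] if and only if z' + w' = z + w and z'·conj(w') = z·conj(w). -/

import Mathlib

open Polynomial

def toQj (z : ℂ) : Quaternion ℝ := ⟨0, 0, z.re, z.im⟩

lemma toQj_re (z : ℂ) : (toQj z).re = 0 := rfl
lemma toQj_imI (z : ℂ) : (toQj z).imI = 0 := rfl
lemma toQj_imJ (z : ℂ) : (toQj z).imJ = z.re := rfl
lemma toQj_imK (z : ℂ) : (toQj z).imK = z.im := rfl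

lemma expand_poly {R : Type*} [Ring R] (a b : R) :
    (1 + C a * X) * (1 + C b * X) = 1 + C (a + b) * X + C (a * b) * X ^ 2 := by
  have key : C a * X * (C b * X) = C (a * b) * X ^ 2 := by
    rw [mul_assoc, ← mul_assoc X, X_mul_C, mul_assoc, ← mul_assoc, ← C_mul, sq]
  simp only [mul_add, add_mul, mul_one, one_mul, key, C_add]
  abel

lemma poly_fact {R : Type*} [Ring R] (a b a' b' : R) :
    (1 + C a * X) * (1 + C b * X) = (1 + C a' * X) * (1 + C b' * X) ↔
      (a + b = a' + b' ∧ a * b = a' * b') := by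
  rw [expand_poly, expand_poly]
  constructor
  · intro h
    have h1 := congrArg (fun p => coeff p 1) h
    have h2 := congrArg (fun p => coeff p 2) h
    simp [coeff_one, coeff_X, mul_assoc, coeff_C_mul, coeff_add, coeff_X_pow] at h1 h2
    exact ⟨h1, h2⟩
  · rintro ⟨h1, h2⟩
    rw [h1, h2]

theorem refactorization_iff_recutting (z w z' w' : ℂ) :
    (1 + C (toQj z) * X) * (1 + C (toQj w) * X) =
      (1 + C (toQj z') * X) * (1 + C (toQj w') * X) ↔
    (z' + w' = z + w ∧ z' * (starRingEnd ℂ) w' = z * (starRingEnd ℂ) w) := by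
  rw [poly_fact]
  constructor
  · rintro ⟨h1, h2⟩
    rw [Quaternion.ext_iff] at h1 h2
    simp [toQj_re, toQj_imI, toQj_imJ, toQj_imK, Quaternion.re_add, Quaternion.imI_add, Quaternion.imJ_add, Quaternion.imK_add, Quaternion.re_mul, Quaternion.imI_mul, Quaternion.imJ_mul, Quaternion.imK_mul] at h1 h2
    constructor
    · apply Complex.ext <;> simp <;> linarith [h1.1, h1.2]
    · apply Complex.ext <;> simp [Complex.mul_re, Complex.mul_im] <;> nlinarith [h2.1, h2.2]
  · rintro ⟨h1, h2⟩
    rw [Complex.ext_iff] at h1 h2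
    simp [Complex.add_re, Complex.add_im, Complex.mul_re, Complex.mul_im] at h1 h2
    constructor <;> rw [Quaternion.ext_iff] <;>
      simp [toQj_re, toQj_imI, toQj_imJ, toQj_imK, Quaternion.re_add, Quaternion.imI_add, Quaternion.imJ_add, Quaternion.imK_add, Quaternion.re_mul, Quaternion.imI_mul, Quaternion.imJ_mul, Quaternion.imK_mul] <;>
      constructor <;> nlinarith [h1.1, h1.2, h2.1, h2.2]
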